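/- Under the same assumptions as the previous comparison lemma, for all s ∈ [0, t] one has 0 ≤ \bar{q}(s) − q(s) ≤ ∫₀^s f(u) du. -/

import Mathlib

open MeasureTheory Set

/-- During the execution of the metaorder, the difference of the two coupled queue
solutions is nonnegative and bounded by the cumulative forcing `∫₀^s f`. -/
theorem stmt4 (lamL lamC Y f q qbar : ℝ → ℝ) (c t : ℝ) (hc : 0 < c) (ht : 0 ≤ t)
    (hL : Antitone lamL) (hC : Monotone lamC)
    (hgap : ∀ p x : ℝ, 0 ≤ x → c * x ≤ lamL p - lamL (p + x) + lamC (p + x) - lamC p)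
    (hY : Continuous Y) (hf : Continuous f) (hfnn : ∀ s, 0 ≤ f s)
    (hft : ∀ s, t < s → f s = 0)
    (hq : ∀ s, 0 ≤ s → HasDerivAt q (lamL (q s) - lamC (q s) - Y s) s)
    (hqbar : ∀ s, 0 ≤ s → HasDerivAt qbar (lamL (qbar s) - lamC (qbar s) - Y s + f s) s)
    (h0 : q 0 = qbar 0) :
    ∀ s, 0 ≤ s → s ≤ t →
      0 ≤ qbar s - q s ∧ qbar s - q s ≤ ∫ u in (0:ℝ)..s, f u := by
  set g : ℝ → ℝ := fun u => qbar u - q u with hgdef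
  have hgd : ∀ u, 0 ≤ u → HasDerivAt g
      ((lamL (qbar u) - lamC (qbar u)) - (lamL (q u) - lamC (q u)) + f u) u := by
    intro u hu
    have h : HasDerivAt (fun x => qbar x - q x) _ u := (hqbar u hu).sub (hq u hu)
    convert h using 1
    ring
  -- nonnegativity for all u ≥ 0
  have key : ∀ u, 0 ≤ u → 0 ≤ g u := by
    intro s0 hs0'
    by_contra hneg
    push_neg at hneg
    have hgc : ContinuousOn g (Icc 0 s0) :=
      fun x hx => (hgd x hx.1).continuousAt.continuousWithinAt
    set A : Set ℝ := Icc 0 s0 ∩ g ⁻¹' {0} with hA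
    have hA0 : (0:ℝ) ∈ A := ⟨⟨le_refl 0, hs0'⟩, by simp [hgdef, h0]⟩
    have hAne : A.Nonempty := ⟨0, hA0⟩
    have hAbdd : BddAbove A := ⟨s0, fun x hx => hx.1.2⟩
    have hAclosed : IsClosed A :=
      hgc.preimage_isClosed_of_isClosed isClosed_Icc isClosed_singleton
    set s1 := sSup A with hs1def
    have hs1A : s1 ∈ A := hAclosed.csSup_mem hAne hAbdd
    have hs1g : g s1 = 0 := hs1A.2
    have hs1nn : 0 ≤ s1 := hs1A.1.1
    have hs1le : s1 ≤ s0 := hs1A.1.2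
    have hs1lt : s1 < s0 := lt_of_le_of_ne hs1le (fun h => by rw [h] at hs1g; linarith)
    -- g < 0 on Ioc s1 s0
    have hneg' : ∀ x ∈ Ioc s1 s0, g x < 0 := by
      intro x hx
      by_contra hge
      push_neg at hge
      have hxs0 : x ≤ s0 := hx.2
      have hx0 : 0 ≤ x := le_trans hs1nn hx.1.le
      have hcont : ContinuousOn g (Icc x s0) :=
        hgc.mono (Icc_subset_Icc hx0 le_rfl)
      have hzero : (0:ℝ) ∈ Icc (g s0) (g x) := ⟨hneg.le, hge⟩
      obtain ⟨z, hz, hgz⟩ := intermediate_value_Icc' hxs0 hcont hzero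
      have hzA : z ∈ A := ⟨⟨le_trans hx0 hz.1, hz.2⟩, hgz⟩
      have h1 : z ≤ s1 := le_csSup hAbdd hzA
      have h2 : s1 < z := lt_of_lt_of_le hx.1 hz.1
      linarith
    -- g is monotone on [s1, s0]
    have hmono : MonotoneOn g (Icc s1 s0) := by
      apply monotoneOn_of_deriv_nonneg (convex_Icc s1 s0)
        (hgc.mono (Icc_subset_Icc hs1nn le_rfl))
      · intro x hx
        rw [interior_Icc] at hx
        exact (hgd x (le_trans hs1nn hx.1.le)).differentiableAt.differentiableWithinAt
      · intro x hx
        rw [interior_Icc] at hx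
        have hx0 : 0 ≤ x := le_trans hs1nn hx.1.le
        rw [(hgd x hx0).deriv]
        have hxneg : g x < 0 := hneg' x ⟨hx.1, hx.2.le⟩
        have hle : qbar x ≤ q x := by
          have : qbar x - q x < 0 := hxneg
          linarith
        have h1 := hL hle
        have h2 := hC hle
        have h3 := hfnn x
        linarith
    have hfin := hmono ⟨le_rfl, hs1le⟩ ⟨hs1lt.le, le_rfl⟩ hs1lt.le
    rw [hs1g] at hfin
    linarith
  intro s hs0 hst
  refine ⟨key s hs0, ?_⟩
  -- upper bound: h := ∫ f - g is monotone on [0, s]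
  set F : ℝ → ℝ := fun u => ∫ x in (0:ℝ)..u, f x with hFdef
  have hFd : ∀ u : ℝ, HasDerivAt F (f u) u := by
    intro u
    exact (hf.integral_hasStrictDerivAt 0 u).hasDerivAt
  set h : ℝ → ℝ := fun u => F u - g u with hhdef
  have hhd : ∀ u, 0 ≤ u → HasDerivAt h
      ((lamL (q u) - lamC (q u)) - (lamL (qbar u) - lamC (qbar u))) u := by
    intro u hu
    have hd : HasDerivAt (fun x => F x - g x) _ u := (hFd u).sub (hgd u hu)
    convert hd using 1
    ring
  have hmono : MonotoneOn h (Icc 0 s) := by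
    apply monotoneOn_of_deriv_nonneg (convex_Icc 0 s)
      (fun x hx => (hhd x hx.1).continuousAt.continuousWithinAt)
    · intro x hx
      rw [interior_Icc] at hx
      exact (hhd x hx.1.le).differentiableAt.differentiableWithinAt
    · intro x hx
      rw [interior_Icc] at hx
      rw [(hhd x hx.1.le).deriv]
      have hle : q x ≤ qbar x := by
        have := key x hx.1.le
        simp only [hgdef] at this
        linarith
      have h1 := hL hle
      have h2 := hC hle
      linarith
  have hfin := hmono ⟨le_rfl, hs0⟩ ⟨hs0, le_rfl⟩ hs0
  have hF0 : F 0 = 0 := by simp [hFdef]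
  have hg0 : g 0 = 0 := by simp [hgdef, h0]
  simp only [hhdef, hF0, hg0] at hfin
  simp only [hgdef, hFdef] at *
  linarith
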